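/- Let G be a profinite group acting continuously on a topological ring A by ring automorphisms, i.e. each g ∈ G acts as a ring automorphism of A and the action map G × A → A is continuous. Let J ⊆ A be an open ideal with g·J = J for every g ∈ G. Assume there exist a finite subset S ⊆ A and a subring B ⊆ A fixed pointwise by G such that the subring of A generated by B ∪ S is dense in A. Then there exists an open subgroup G₀ ≤ G such that g·a − a ∈ J for all g ∈ G₀ and all a ∈ A; that is, G₀ acts trivially on the discrete quotient ring A/J. -/

import Mathlib

/-!
If a profinite group `G` acts continuously on a topological ring `A` by ring
automorphisms, `J ⊆ A` is a `G`-stable open ideal, and there are a finite set `S ⊆ A`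
and a pointwise-`G`-fixed subring `B ⊆ A` such that the subring generated by `B ∪ S`
is dense in `A`, then some open subgroup `G₀ ≤ G` acts trivially on `A/J`.
-/

open Pointwise in
theorem exists_open_subgroup_trivial_mod_open_ideal
    {G : Type*} [Group G] [TopologicalSpace G] [IsTopologicalGroup G]
    [CompactSpace G] [T2Space G] [TotallyDisconnectedSpace G]
    {A : Type*} [CommRing A] [TopologicalSpace A] [IsTopologicalRing A]
    [MulSemiringAction G A]
    (hcont : Continuous fun q : G × A => q.1 • q.2)
    (J : Ideal A) (hJopen : IsOpen (J : Set A))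
    (hJstable : ∀ g : G, g • (J : Set A) = (J : Set A))
    (S : Finset A) (B : Subring A)
    (hB : ∀ g : G, ∀ b ∈ B, g • b = b)
    (hdense : Dense ((Subring.closure ((B : Set A) ∪ (S : Set A))) : Set A)) :
    ∃ G₀ : Subgroup G, IsOpen (G₀ : Set G) ∧ ∀ g ∈ G₀, ∀ a : A, g • a - a ∈ J := by
  -- J is closed since it's an open additive subgroup
  have hJclosed : IsClosed (J : Set A) := by
    have : IsClosed (J.toAddSubgroup : Set A) :=
      AddSubgroup.isClosed_of_isOpen J.toAddSubgroup hJopen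
    exact this
  -- the open set of g's moving all of S into itself mod J
  set U : Set G := ⋂ s ∈ S, {g : G | g • s - s ∈ J} with hU
  have hUopen : IsOpen U := by
    apply isOpen_biInter_finset
    intro s _
    have hcont2 : Continuous fun g : G => g • s - s :=
      (hcont.comp (continuous_id.prodMk continuous_const)).sub continuous_const
    exact hJopen.preimage hcont2
  have hUone : (1 : G) ∈ U := by
    simp only [hU, Set.mem_iInter, Set.mem_setOf_eq]
    intro s _
    simp [one_smul]
  obtain ⟨V, hVclopen, hVone, hVU⟩ := compact_exists_isClopen_in_isOpen hUopen hUone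
  obtain ⟨H, hHV⟩ :=
    IsTopologicalGroup.exist_openNormalSubgroup_sub_clopen_nhds_of_one hVclopen hVone
  refine ⟨H.toSubgroup, H.isOpen, ?_⟩
  intro g hg
  have hgS : ∀ s ∈ S, g • s - s ∈ J := by
    intro s hs
    have := hVU (hHV hg)
    simp only [hU, Set.mem_iInter, Set.mem_setOf_eq] at this
    exact this s hs
  -- the set of a with g•a - a ∈ J is a subring (indeed contains closure(B ∪ S))
  set C : Subring A :=
    { carrier := {a : A | g • a - a ∈ J}
      zero_mem' := by simp [smul_zero]
      one_mem' := by simp [smul_one]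
      add_mem' := fun {a b} ha hb => by
        show g • (a + b) - (a + b) ∈ J
        have h : g • (a + b) - (a + b) = (g • a - a) + (g • b - b) := by
          rw [smul_add]; ring
        rw [h]; exact J.add_mem ha hb
      neg_mem' := fun {a} ha => by
        show g • (-a) - (-a) ∈ J
        have h : g • (-a) - (-a) = -(g • a - a) := by rw [smul_neg]; ring
        rw [h]; exact J.neg_mem ha
      mul_mem' := fun {a b} ha hb => by
        show g • (a * b) - a * b ∈ J
        have h : g • (a * b) - a * b = (g • a - a) * (g • b) + a * (g • b - b) := by
          rw [smul_mul']; ring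
        rw [h]; exact J.add_mem (J.mul_mem_right _ ha) (J.mul_mem_left _ hb) } with hC
  have hsub : (Subring.closure ((B : Set A) ∪ (S : Set A)) : Set A) ⊆ (C : Set A) := by
    apply Subring.closure_le.mpr
    rintro a (haB | haS)
    · show g • a - a ∈ J
      rw [hB g a haB]; simp
    · exact hgS a haS
  -- C is closed, contains a dense set, hence is everything
  have hCclosed : IsClosed (C : Set A) := by
    have hcont2 : Continuous fun a : A => g • a - a :=
      (hcont.comp (continuous_const.prodMk continuous_id)).sub continuous_id
    exact hJclosed.preimage hcont2
  intro a
  have hCuniv : (C : Set A) = Set.univ := by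
    have hd : Dense (C : Set A) := (hdense.mono hsub)
    rw [← hCclosed.closure_eq]
    exact hd.closure_eq
  have ha : a ∈ (C : Set A) := by rw [hCuniv]; trivial
  exact ha
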